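/- arXiv:math/0609420 — 3 statements merged into one kernel-verified Lean document; each statement's English description precedes it below -/
import Mathlib

section
/- Let X be a simplicial set such that every map Λ[3,1] → X extends to a map Δ[3] → X, and such that any two 2-simplices of X having the same d₀-face and the same d₂-face are equal. Let α, β, γ, δ ∈ X₂ satisfy d₀α = d₂β, d₂γ = d₁α, d₀γ = d₀β, d₂δ = d₂α, and d₀δ = d₁β. Then d₁γ = d₁δ. (This is the associativity of the composition of arrows in a groupoid extracted from the horn-filling conditions: if α witnesses a composite p of f and g, β witnesses a composite q of g and h, γ witnesses a composite of p and h, and δ witnesses a composite of f and q, then the two composites agree.) -/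
open CategoryTheory Simplicial

section AssocHornAuxSection
open SSet SimplexCategory Opposite

universe u

namespace AssocHornAux

variable {X : SSet.{u}}

/-- value of the would-be horn map at a simplex `f` missing vertex `j`. -/
noncomputable def val (F : Fin 4 → X _⦋2⦌) {n : ℕ}
    (f : (⦋n⦌ : SimplexCategory) ⟶ ⦋3⦌) (j : Fin 4) : X _⦋n⦌ :=
  X.map (factor_δ f j).op (F j)

lemma val_eq_of (F : Fin 4 → X _⦋2⦌) {n : ℕ} (f : (⦋n⦌ : SimplexCategory) ⟶ ⦋3⦌)
    (j k : Fin 4) (k' j' : Fin 3)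
    (hδ : (δ j' : (⦋1⦌ : SimplexCategory) ⟶ ⦋2⦌) ≫ δ k = δ k' ≫ δ j)
    (hδjk : (δ j).toOrderHom k' = k)
    (hFjk : X.δ k' (F j) = X.δ j' (F k))
    (hfj : ∀ x, f.toOrderHom x ≠ j) (hfk : ∀ x, f.toOrderHom x ≠ k) :
    val F f j = val F f k := by
  have h1 : factor_δ f j ≫ δ j = f := factor_δ_spec f j hfj
  have hmiss : ∀ x, (factor_δ f j).toOrderHom x ≠ k' := by
    intro x hx
    apply hfk x
    conv_lhs => rw [← h1]
    show (δ j).toOrderHom ((factor_δ f j).toOrderHom x) = k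
    rw [hx, hδjk]
  have h2 : factor_δ (factor_δ f j) k' ≫ δ k' = factor_δ f j :=
    factor_δ_spec _ _ hmiss
  have h3 : factor_δ (factor_δ f j) k' ≫ δ j' = factor_δ f k := by
    rw [← cancel_mono (δ k), Category.assoc, hδ, ← Category.assoc, h2, h1,
      factor_δ_spec f k hfk]
  show X.map (factor_δ f j).op (F j) = X.map (factor_δ f k).op (F k)
  rw [← h2, ← h3, op_comp, op_comp, FunctorToTypes.map_comp_apply,
    FunctorToTypes.map_comp_apply]
  exact congrArg (X.map (factor_δ (factor_δ f j) k').op) hFjk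

lemma val_eq (F : Fin 4 → X _⦋2⦌)
    (c02 : X.δ 1 (F 0) = X.δ 0 (F 2))
    (c03 : X.δ 2 (F 0) = X.δ 0 (F 3))
    (c23 : X.δ 2 (F 2) = X.δ 2 (F 3))
    {n : ℕ} (f : (⦋n⦌ : SimplexCategory) ⟶ ⦋3⦌) (j k : Fin 4)
    (hj : j ≠ 1) (hk : k ≠ 1)
    (hfj : ∀ x, f.toOrderHom x ≠ j) (hfk : ∀ x, f.toOrderHom x ≠ k) :
    val F f j = val F f k := by
  have key : ∀ (j k : Fin 4), j ≠ 1 → k ≠ 1 → j < k →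
      (∀ x, f.toOrderHom x ≠ j) → (∀ x, f.toOrderHom x ≠ k) →
      val F f j = val F f k := by
    intro j k hj hk hjk hfj hfk
    fin_cases j <;> fin_cases k <;> first
      | (exfalso; revert hjk hj hk; decide)
      | exact val_eq_of F f 0 2 1 0 (by ext x : 3; fin_cases x <;> rfl) rfl c02 hfj hfk
      | exact val_eq_of F f 0 3 2 0 (by ext x : 3; fin_cases x <;> rfl) rfl c03 hfj hfk
      | exact val_eq_of F f 2 3 2 2 (by ext x : 3; fin_cases x <;> rfl) rfl c23 hfj hfk
  rcases lt_trichotomy j k with h | h | h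
  · exact key j k hj hk h hfj hfk
  · rw [h]
  · exact (key k j hk hj h hfk hfj).symm


/-- A vertex missing from a horn simplex. -/
lemma horn_exists {n : ℕ} {i : Fin (n + 2)} {m : SimplexCategoryᵒᵖ}
    (f : (Λ[n + 1, i] : SSet.{u}).obj m) :
    ∃ j, ¬j = i ∧
      ∀ k, (stdSimplex.objEquiv f.1).toOrderHom k ≠ j := by
  obtain ⟨f', hf⟩ := stdSimplex.objEquiv.symm.surjective f.1
  obtain ⟨g, hg⟩ := f
  dsimp at hf
  subst hf
  simp [← Set.univ_subset_iff, Set.subset_def, stdSimplex.asOrderHom, mem_horn_iff, not_or] at hg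
  exact hg

/-- The hom part of the to-be-constructed simplex of `f`, as a plain hom. -/
noncomputable def toHom {m : SimplexCategoryᵒᵖ} (f : (Λ[3, 1] : SSet.{u}).obj m) :
    (⦋m.unop.len⦌ : SimplexCategory) ⟶ ⦋3⦌ :=
  stdSimplex.objEquiv f.1

noncomputable def idx {m : SimplexCategoryᵒᵖ} (f : (Λ[3, 1] : SSet.{u}).obj m) : Fin 4 :=
  (horn_exists f).choose

lemma idx_ne {m : SimplexCategoryᵒᵖ} (f : (Λ[3, 1] : SSet.{u}).obj m) : idx f ≠ 1 :=
  (horn_exists f).choose_spec.1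

lemma idx_miss {m : SimplexCategoryᵒᵖ} (f : (Λ[3, 1] : SSet.{u}).obj m) :
    ∀ k, (toHom f).toOrderHom k ≠ idx f :=
  (horn_exists f).choose_spec.2

/-- The horn map built from three compatible 2-simplices. -/
noncomputable def hornHom (F : Fin 4 → X _⦋2⦌)
    (c02 : X.δ 1 (F 0) = X.δ 0 (F 2))
    (c03 : X.δ 2 (F 0) = X.δ 0 (F 3))
    (c23 : X.δ 2 (F 2) = X.δ 2 (F 3)) : (Λ[3, 1] : SSet) ⟶ X where
  app m := TypeCat.ofHom fun f => val F (toHom f) (idx f)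
  naturality m m' u := by
    ext f
    show val F (toHom ((Λ[3, 1] : SSet.{u}).map u f)) (idx ((Λ[3, 1] : SSet.{u}).map u f)) = X.map u (val F (toHom f) (idx f))
    have hth : toHom ((Λ[3, 1] : SSet.{u}).map u f) =
        ((u.unop ≫ toHom f : m'.unop ⟶ ⦋3⦌) :
          (⦋m'.unop.len⦌ : SimplexCategory) ⟶ ⦋3⦌) := rfl
    have hmiss : ∀ k, (toHom ((Λ[3, 1] : SSet.{u}).map u f)).toOrderHom k ≠ idx f :=
      fun k => idx_miss f _
    rw [val_eq F c02 c03 c23 _ (idx _) (idx f) (idx_ne _) (idx_ne f) (idx_miss _) hmiss]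
    show X.map (factor_δ (toHom ((Λ[3, 1] : SSet.{u}).map u f)) (idx f)).op (F (idx f)) =
      X.map u (X.map (factor_δ (toHom f) (idx f)).op (F (idx f)))
    have h4 : factor_δ (toHom ((Λ[3, 1] : SSet.{u}).map u f)) (idx f) =
        (u.unop ≫ factor_δ (toHom f) (idx f) : m'.unop ⟶ ⦋2⦌) := by
      rw [hth]
      dsimp [factor_δ]
      rw [Category.assoc]
    rw [h4, op_comp, FunctorToTypes.map_comp_apply]
    rfl

lemma hornHom_face (F : Fin 4 → X _⦋2⦌)
    (c02 : X.δ 1 (F 0) = X.δ 0 (F 2))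
    (c03 : X.δ 2 (F 0) = X.δ 0 (F 3))
    (c23 : X.δ 2 (F 2) = X.δ 2 (F 3)) (j : Fin 4) (hj : j ≠ 1) :
    (hornHom F c02 c03 c23).app (op ⦋2⦌) (horn.face 1 j hj) = F j := by
  show val F (toHom (horn.face 1 j hj)) (idx _) = F j
  have hth : toHom (horn.face (1 : Fin 4) j hj) = δ j := rfl
  have hmissj : ∀ k, (toHom (horn.face (1 : Fin 4) j hj)).toOrderHom k ≠ j := by
    rw [hth]
    intro k
    exact Fin.succAbove_ne j k
  rw [val_eq F c02 c03 c23 _ (idx _) j (idx_ne _) hj (idx_miss _) hmissj]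
  show X.map (factor_δ (toHom (horn.face 1 j hj)) j).op (F j) = F j
  have : factor_δ (toHom (horn.face (1 : Fin 4) j hj)) j = 𝟙 _ := by
    rw [← cancel_mono (δ j), factor_δ_spec _ _ hmissj, hth, Category.id_comp]
  rw [this, op_id]
  exact ConcreteCategory.congr_hom (X.map_id _) (F j)

lemma ddeq {X : SSet.{u}} (a a' : Fin 3) (b b' : Fin 4)
    (h : (δ a : (⦋1⦌ : SimplexCategory) ⟶ ⦋2⦌) ≫ δ b = δ a' ≫ δ b') (s : X _⦋3⦌) :
    X.δ a (X.δ b s) = X.δ a' (X.δ b' s) := by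
  show X.map (SimplexCategory.δ a).op (X.map (SimplexCategory.δ b).op s) = _
  rw [← FunctorToTypes.map_comp_apply, ← op_comp, h, op_comp, FunctorToTypes.map_comp_apply]
  rfl

lemma delta_yonedaEquiv {X : SSet.{u}} (σ : Δ[3] ⟶ X) (j : Fin 4) :
    X.δ j (SSet.yonedaEquiv σ) =
      σ.app (op ⦋2⦌) (stdSimplex.objEquiv.symm (δ j)) := by
  have hnat := ConcreteCategory.congr_hom (σ.naturality ((δ j).op))
    ((stdSimplex.objEquiv (n := ⦋3⦌) (m := op ⦋3⦌)).symm (𝟙 (⦋3⦌ : SimplexCategory)))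
  dsimp at hnat
  show X.map (δ j).op
      (σ.app (op ⦋3⦌) ((stdSimplex.objEquiv (n := ⦋3⦌) (m := op ⦋3⦌)).symm (𝟙 (⦋3⦌ : SimplexCategory)))) = _
  rw [← hnat]
  congr 1

end AssocHornAux

end AssocHornAuxSection

/-- Associativity of composition extracted from horn filling: in a simplicial set in
which every `Λ[3,1]`-horn has a filler and `Λ[2,1]`-horn fillers are unique (any two
2-simplices with the same `d₀`- and `d₂`-faces coincide), witnesses for the two ways
of composing three arrows have the same `d₁`-face. -/
theorem assoc_of_horn_filling (X : SSet.{u})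
    (hfill : ∀ σ₀ : (Λ[3, 1] : SSet) ⟶ X, ∃ σ : Δ[3] ⟶ X, σ₀ = Λ[3, 1].ι ≫ σ)
    (huniq : ∀ η η' : X _⦋2⦌, X.δ 0 η = X.δ 0 η' → X.δ 2 η = X.δ 2 η' → η = η')
    (α β γ δ : X _⦋2⦌)
    (h₁ : X.δ 0 α = X.δ 2 β)
    (h₂ : X.δ 2 γ = X.δ 1 α)
    (h₃ : X.δ 0 γ = X.δ 0 β)
    (h₄ : X.δ 2 δ = X.δ 2 α)
    (h₅ : X.δ 0 δ = X.δ 1 β) :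
    X.δ 1 γ = X.δ 1 δ := by
  classical
  set F : Fin 4 → X _⦋2⦌ := ![β, β, δ, α] with hFdef
  have F0 : F 0 = β := by simp [hFdef]
  have F2 : F 2 = δ := by simp [hFdef]
  have F3 : F 3 = α := by simp [hFdef]
  have c02 : X.δ 1 (F 0) = X.δ 0 (F 2) := by rw [F0, F2]; exact h₅.symm
  have c03 : X.δ 2 (F 0) = X.δ 0 (F 3) := by rw [F0, F3]; exact h₁.symm
  have c23 : X.δ 2 (F 2) = X.δ 2 (F 3) := by rw [F2, F3]; exact h₄
  obtain ⟨σ, hσ⟩ := hfill (AssocHornAux.hornHom F c02 c03 c23)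
  set s : X _⦋3⦌ := SSet.yonedaEquiv σ with hsdef
  have hface : ∀ (j : Fin 4) (hj : j ≠ 1), X.δ j s = F j := by
    intro j hj
    have happ := ConcreteCategory.congr_hom (NatTrans.congr_app hσ (Opposite.op (SimplexCategory.mk 2)))
      (SSet.horn.face 1 j hj)
    rw [AssocHornAux.hornHom_face F c02 c03 c23 j hj] at happ
    rw [hsdef, AssocHornAux.delta_yonedaEquiv σ j, happ]
    rfl
  have hd0 : X.δ 0 s = β := by rw [hface 0 (by decide), F0]
  have hd2 : X.δ 2 s = δ := by rw [hface 2 (by decide), F2]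
  have hd3 : X.δ 3 s = α := by rw [hface 3 (by decide), F3]
  have e2 : X.δ 2 γ = X.δ 2 (X.δ 1 s) := by
    rw [AssocHornAux.ddeq 2 1 1 3 (by ext x : 3; fin_cases x <;> rfl) s, hd3, h₂]
  have e0 : X.δ 0 γ = X.δ 0 (X.δ 1 s) := by
    rw [AssocHornAux.ddeq 0 0 1 0 (by ext x : 3; fin_cases x <;> rfl) s, hd0, h₃]
  have hγ : γ = X.δ 1 s := huniq γ (X.δ 1 s) e0 e2
  rw [hγ, AssocHornAux.ddeq 1 1 1 2 (by ext x : 3; fin_cases x <;> rfl) s, hd2]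
end

section
/- Every 2-groupoid is 3-coskeletal: if X is a simplicial set satisfying Kan(m,j) for all m ≥ 1 and 0 ≤ j ≤ m, and Kan!(m,j) for all m ≥ 3 and 0 ≤ j ≤ m, then the unit map X → cosk₃(tr₃ X) of the 3-coskeleton adjunction is an isomorphism of simplicial sets; i.e., X is determined by its simplices of dimension at most 3. -/
open CategoryTheory Simplicial

/-- `Kan(m,j)`: every map from the horn `Λ[m,j]` to `X` extends along the horn
inclusion to a map `Δ[m] ⟶ X`. -/
def SSet.KanCond (X : SSet.{u}) (m : ℕ) (j : Fin (m + 1)) : Prop :=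
  ∀ σ₀ : (Λ[m, j] : SSet.{u}) ⟶ X, ∃ σ : Δ[m] ⟶ X, σ₀ = Λ[m, j].ι ≫ σ

/-- `Kan!(m,j)`: every map from the horn `Λ[m,j]` to `X` extends *uniquely* along the
horn inclusion to a map `Δ[m] ⟶ X`. -/
def SSet.KanCondUnique (X : SSet.{u}) (m : ℕ) (j : Fin (m + 1)) : Prop :=
  ∀ σ₀ : (Λ[m, j] : SSet.{u}) ⟶ X, ∃! σ : Δ[m] ⟶ X, σ₀ = Λ[m, j].ι ≫ σ


open SimplexCategory Opposite

universe u



lemma unique_of_faces {X : SSet.{u}} {m : ℕ} (h : X.KanCondUnique (m+1) 0)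
    (z w : X.obj (op ⦋m+1⦌))
    (hf : ∀ j : Fin (m+2), j ≠ 0 → X.map (SimplexCategory.δ j).op z
        = X.map (SimplexCategory.δ j).op w) : z = w := by
  obtain ⟨σ, -, hu⟩ := h (Λ[m+1, 0].ι ≫ (SSet.yonedaEquiv (X := X) (n := ⦋m+1⦌)).symm z)
  have hz : (SSet.yonedaEquiv (X := X) (n := ⦋m+1⦌)).symm z = σ := hu _ rfl
  have hw : (SSet.yonedaEquiv (X := X) (n := ⦋m+1⦌)).symm w = σ := by
    apply hu
    apply SSet.horn.hom_ext
    intro j hj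
    exact hf j hj
  exact (SSet.yonedaEquiv (X := X) (n := ⦋m+1⦌)).symm.injective (hz.trans hw.symm)

lemma eq_of_low_faces {X : SSet.{u}}
    (h₂ : ∀ (m : ℕ), 3 ≤ m → ∀ j : Fin (m + 1), X.KanCondUnique m j) :
    ∀ (m : ℕ) (z w : X.obj (op ⦋m⦌)),
    (∀ (p : ℕ) (_ : p ≤ 3) (α : (⦋p⦌ : SimplexCategory) ⟶ ⦋m⦌),
      X.map α.op z = X.map α.op w) → z = w := by
  intro m
  induction m with
  | zero =>
    intro z w h
    have := h 0 (by omega) (𝟙 _)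
    simpa using this
  | succ m' IH =>
    intro z w h
    by_cases hm : m' + 1 ≤ 3
    · have := h (m'+1) hm (𝟙 _)
      simpa using this
    · apply unique_of_faces (h₂ (m'+1) (by omega) 0)
      intro j _
      apply IH
      intro p hp α
      have h1 : ∀ (y : X.obj (op ⦋m'+1⦌)), X.map α.op (X.map (SimplexCategory.δ j).op y)
          = X.map (α ≫ SimplexCategory.δ j).op y := by
        intro y
        rw [op_comp, FunctorToTypes.map_comp_apply]
      rw [h1, h1]
      exact h p hp _

lemma g_nat {X : SSet.{u}} {k : ℕ}
    (g : (SSet.truncation 3).obj Δ[k] ⟶ (SSet.truncation 3).obj X)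
    {p q : ℕ} (hp : p ≤ 3) (hq : q ≤ 3) (β : (⦋q⦌ : SimplexCategory) ⟶ ⦋p⦌)
    (α : (⦋p⦌ : SimplexCategory) ⟶ ⦋k⦌) :
    X.map β.op (g.app (op ⟨⦋p⦌, hp⟩) (ULift.up α)) = g.app (op ⟨⦋q⦌, hq⟩) (ULift.up (β ≫ α)) := by
  have := types_congr_hom (g.naturality (Quiver.Hom.op
    (X := (⟨⦋q⦌, hq⟩ : SimplexCategory.Truncated 3)) (Y := ⟨⦋p⦌, hp⟩) (ObjectProperty.homMk β))) (ULift.up α)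
  exact this.symm

set_option maxHeartbeats 1000000 in
lemma exists_lift {X : SSet.{u}}
    (h₁ : ∀ (m : ℕ), 1 ≤ m → ∀ j : Fin (m + 1), X.KanCond m j)
    (h₂ : ∀ (m : ℕ), 3 ≤ m → ∀ j : Fin (m + 1), X.KanCondUnique m j) :
    ∀ (k : ℕ) (g : (SSet.truncation 3).obj Δ[k] ⟶ (SSet.truncation 3).obj X),
    ∃ x : X.obj (op ⦋k⦌), ∀ (p : ℕ) (hp : p ≤ 3) (α : (⦋p⦌ : SimplexCategory) ⟶ ⦋k⦌),
      X.map α.op x = g.app (op ⟨⦋p⦌, hp⟩) (ULift.up α) := by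
  intro k
  induction k using Nat.strong_induction_on with
  | _ k IH =>
  intro g
  by_cases hk : k ≤ 3
  · refine ⟨g.app (op ⟨⦋k⦌, hk⟩) (ULift.up (𝟙 _)), ?_⟩
    intro p hp α
    have := g_nat g hk hp α (𝟙 _)
    simpa using this
  · obtain ⟨n, rfl⟩ : ∃ n, k = n + 1 := ⟨k - 1, by omega⟩
    have hn3 : 3 ≤ n := by omega
    -- lifts of the faces
    have H : ∀ i : Fin (n+2), ∃ xi : X.obj (op ⦋n⦌),
        ∀ (p : ℕ) (hp : p ≤ 3) (β : (⦋p⦌ : SimplexCategory) ⟶ ⦋n⦌),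
          X.map β.op xi = g.app (op ⟨⦋p⦌, hp⟩) (ULift.up (β ≫ δ i)) := by
      intro i
      obtain ⟨xi, hxi⟩ := IH n (by omega)
        ((SSet.truncation 3).map (SSet.stdSimplex.map (δ i)) ≫ g)
      exact ⟨xi, fun p hp β => hxi p hp β⟩
    choose xs hxs using H
    -- the defining property of the horn map
    let P : ∀ (m : SimplexCategoryᵒᵖ), Δ[n+1].obj m → X.obj m → Prop :=
      fun m θ z => ∀ (p : ℕ) (hp : p ≤ 3) (α : (⦋p⦌ : SimplexCategory) ⟶ m.unop),
        X.map α.op z = g.app (op ⟨⦋p⦌, hp⟩) (ULift.up (α ≫ θ.down))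
    have huniq : ∀ (m : SimplexCategoryᵒᵖ) (θ : Δ[n+1].obj m) (z z' : X.obj m),
        P m θ z → P m θ z' → z = z' := by
      intro m
      induction m using Opposite.rec with | op m' => ?_
      induction m' using SimplexCategory.rec with | mk q => ?_
      intro θ z z' hz hz'
      apply eq_of_low_faces h₂ q
      intro p hp α
      rw [hz p hp α, hz' p hp α]
    have hex : ∀ (m : SimplexCategoryᵒᵖ) (θ : (Λ[n+1, 0] : SSet.{u}).obj m), ∃ z, P m θ.1 z := by
      intro m
      induction m using Opposite.rec with | op m' => ?_
      induction m' using SimplexCategory.rec with | mk q => ?_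
      intro θ
      obtain ⟨i, hir, -⟩ : ∃ i : Fin (n+2), i ∉ Set.range (SSet.stdSimplex.asOrderHom θ.1) ∧ i ≠ 0 := by
        obtain ⟨i, hi⟩ := (Set.ne_univ_iff_exists_notMem _).mp θ.2
        simp only [Set.mem_union, Set.mem_singleton_iff, not_or] at hi
        exact ⟨i, hi⟩
      have hfac : factor_δ θ.1.down i ≫ δ i = θ.1.down :=
        factor_δ_spec θ.1.down i (fun a ha => hir ⟨a, ha⟩)
      refine ⟨X.map (factor_δ θ.1.down i).op (xs i), ?_⟩
      intro p hp α
      rw [← FunctorToTypes.map_comp_apply, ← op_comp, hxs i p hp (α ≫ factor_δ θ.1.down i),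
        Category.assoc, hfac]
    -- the horn map
    let s : (Λ[n+1, 0] : SSet.{u}) ⟶ X :=
      { app := fun m => ↾fun θ => (hex m θ).choose
        naturality := by
          intro m m₂ f
          ext θ
          show (hex m₂ ((Λ[n+1, 0] : SSet.{u}).map f θ)).choose = X.map f ((hex m θ).choose)
          refine (huniq m₂ (Δ[n+1].map f θ.1) _ _ ?_ ((hex m₂ _).choose_spec)).symm
          intro p hp α
          rw [← FunctorToTypes.map_comp_apply]
          have hc : f ≫ α.op = (α ≫ f.unop).op := rfl
          rw [hc, (hex m θ).choose_spec p hp (α ≫ f.unop)]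
          have hd : (Δ[n+1].map f θ.1).down = f.unop ≫ θ.1.down := rfl
          rw [hd, Category.assoc] }
    obtain ⟨σ, hσ⟩ := h₁ (n+1) (by omega) 0 s
    refine ⟨σ.app (op ⦋n+1⦌) (ULift.up (𝟙 ⦋n+1⦌)), ?_⟩
    have happ : ∀ (p : ℕ) (α : (⦋p⦌ : SimplexCategory) ⟶ ⦋n+1⦌),
        X.map α.op (σ.app (op ⦋n+1⦌) (ULift.up (𝟙 ⦋n+1⦌))) = σ.app (op ⦋p⦌) (ULift.up α) := by
      intro p α
      have h0 := types_congr_hom (σ.naturality α.op) (ULift.up (𝟙 ⦋n+1⦌))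
      simp only [types_comp_apply] at h0
      have h2 : (Δ[n+1].map α.op (ULift.up (𝟙 ⦋n+1⦌))) = ULift.up α := by
        show ULift.up (α ≫ 𝟙 ⦋n+1⦌) = ULift.up α
        rw [Category.comp_id]
      exact h0.symm.trans (congrArg _ h2)
    have key : ∀ (p : ℕ) (hp : p ≤ 3) (α : (⦋p⦌ : SimplexCategory) ⟶ ⦋n+1⦌)
        (hin : Set.range (SSet.stdSimplex.asOrderHom (ULift.up α : Δ[n+1].obj (op ⦋p⦌))) ∪ {0}
          ≠ Set.univ),
        X.map α.op (σ.app (op ⦋n+1⦌) (ULift.up (𝟙 ⦋n+1⦌)))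
          = g.app (op ⟨⦋p⦌, hp⟩) (ULift.up α) := by
      intro p hp α hin
      rw [happ p α]
      have hs : σ.app (op ⦋p⦌) (ULift.up α) = s.app (op ⦋p⦌) ⟨ULift.up α, hin⟩ := by
        rw [hσ]; rfl
      rw [hs]
      exact huniq (op ⦋p⦌) (ULift.up α) _ _
        ((hex (op ⦋p⦌) ⟨ULift.up α, hin⟩).choose_spec) (fun q hq β => g_nat g hp hq β α)
    intro p hp α
    by_cases hin : Set.range (SSet.stdSimplex.asOrderHom (ULift.up α : Δ[n+1].obj (op ⦋p⦌))) ∪ {0}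
        ≠ Set.univ
    · exact key p hp α hin
    · push_neg at hin
      -- only possible if n = 3, p = 3, α = δ 0
      have hcov : ∀ b : Fin (n+2), b ≠ 0 → ∃ a : Fin (p+1), α.toOrderHom a = b := by
        intro b hb
        have := (Set.eq_univ_iff_forall.mp hin) b
        rcases this with h | h
        · exact h
        · exact absurd h hb
      obtain ⟨a1, ha1⟩ := hcov ⟨1, by omega⟩ (by simp [Fin.ext_iff])
      obtain ⟨a2, ha2⟩ := hcov ⟨2, by omega⟩ (by simp [Fin.ext_iff])
      obtain ⟨a3, ha3⟩ := hcov ⟨3, by omega⟩ (by simp [Fin.ext_iff])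
      obtain ⟨a4, ha4⟩ := hcov ⟨4, by omega⟩ (by simp [Fin.ext_iff])
      have mono := α.toOrderHom.monotone
      have h12 : a1 < a2 := by
        by_contra hcon
        push_neg at hcon
        have := mono hcon
        rw [ha1, ha2] at this
        simp [Fin.le_def] at this
      have h23 : a2 < a3 := by
        by_contra hcon
        push_neg at hcon
        have := mono hcon
        rw [ha2, ha3] at this
        simp [Fin.le_def] at this
      have h34 : a3 < a4 := by
        by_contra hcon
        push_neg at hcon
        have := mono hcon
        rw [ha3, ha4] at this
        simp [Fin.le_def] at this
      have c12 : a1.val < a2.val := h12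
      have c23 : a2.val < a3.val := h23
      have c34 : a3.val < a4.val := h34
      have b1 : a1.val < p + 1 := a1.2
      have b2 : a2.val < p + 1 := a2.2
      have b3 : a3.val < p + 1 := a3.2
      have b4 : a4.val < p + 1 := a4.2
      have hp3 : p = 3 := by omega
      subst hp3
      have va1 : a1.val = 0 := by omega
      have va2 : a2.val = 1 := by omega
      have va3 : a3.val = 2 := by omega
      have va4 : a4.val = 3 := by omega
      have hn : n = 3 := by
        by_contra hcon
        obtain ⟨a5, ha5⟩ := hcov ⟨5, by omega⟩ (by simp [Fin.ext_iff])
        have b5 : a5.val < 4 := a5.2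
        have : a5 = a1 ∨ a5 = a2 ∨ a5 = a3 ∨ a5 = a4 := by
          rcases (by omega : a5.val = 0 ∨ a5.val = 1 ∨ a5.val = 2 ∨ a5.val = 3) with
            h | h | h | h
          · exact Or.inl (Fin.ext (by omega))
          · exact Or.inr (Or.inl (Fin.ext (by omega)))
          · exact Or.inr (Or.inr (Or.inl (Fin.ext (by omega))))
          · exact Or.inr (Or.inr (Or.inr (Fin.ext (by omega))))
        rcases this with rfl | rfl | rfl | rfl
        · exact absurd (ha1.symm.trans ha5) (by simp [Fin.ext_iff])
        · exact absurd (ha2.symm.trans ha5) (by simp [Fin.ext_iff])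
        · exact absurd (ha3.symm.trans ha5) (by simp [Fin.ext_iff])
        · exact absurd (ha4.symm.trans ha5) (by simp [Fin.ext_iff])
      subst hn
      have hα : α = δ (0 : Fin 5) := by
        ext a : 3
        apply Fin.ext
        have hb : a.val < 4 := a.2
        have hδ : ((δ (0 : Fin 5)).toOrderHom a).val = a.val + 1 := by
          simp [δ, Fin.zero_succAbove]
        rw [hδ]
        rcases (by omega : a.val = 0 ∨ a.val = 1 ∨ a.val = 2 ∨ a.val = 3) with h | h | h | h
        · have e : a = a1 := Fin.ext (by omega)
          rw [e, ha1]; simp [h, va1]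
        · have e : a = a2 := Fin.ext (by omega)
          rw [e, ha2]; simp [h, va2]
        · have e : a = a3 := Fin.ext (by omega)
          rw [e, ha3]; simp [h, va3]
        · have e : a = a4 := Fin.ext (by omega)
          rw [e, ha4]; simp [h, va4]
      subst hα
      -- compare the 0-th face with the prescribed one via unique 3-horn filling
      apply unique_of_faces (m := 2) (h₂ 3 (by omega) 0)
      intro j hj
      have lhs : X.map (δ j).op (X.map (δ (0 : Fin 5)).op
            (σ.app (op ⦋3+1⦌) (ULift.up (𝟙 ⦋3+1⦌))))
          = X.map (δ j ≫ δ (0 : Fin 5)).op (σ.app (op ⦋3+1⦌) (ULift.up (𝟙 ⦋3+1⦌))) := by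
        rw [op_comp, FunctorToTypes.map_comp_apply]
      rw [lhs]
      have hhorn : Set.range (SSet.stdSimplex.asOrderHom
            (ULift.up (δ j ≫ δ (0 : Fin 5)) : Δ[3+1].obj (op ⦋2⦌))) ∪ {0} ≠ Set.univ := by
        intro hcon
        have := (Set.eq_univ_iff_forall.mp hcon) j.succ
        rcases this with h | h
        · obtain ⟨a, ha⟩ := h
          have h5 : (δ (0 : Fin 5)).toOrderHom ((δ j).toOrderHom a) = j.succ := ha
          rw [show ∀ b : Fin 4, (δ (0 : Fin 5)).toOrderHom b = b.succ from
            fun b => by simp [δ, Fin.zero_succAbove]] at h5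
          exact Fin.succAbove_ne j a (Fin.succ_injective _ h5)
        · simp only [Set.mem_singleton_iff] at h
          exact Fin.succ_ne_zero j h
      rw [key 2 (by omega) (δ j ≫ δ (0 : Fin 5)) hhorn]
      exact (g_nat g hp (by omega) (δ j) (δ (0 : Fin 5))).symm

lemma yoneda_map_app {X : SSet.{u}} {n p : ℕ} (f : Δ[n] ⟶ X)
    (α : (⦋p⦌ : SimplexCategory) ⟶ ⦋n⦌) :
    X.map α.op (SSet.yonedaEquiv (X := X) (n := ⦋n⦌) f) = f.app (op ⦋p⦌) (ULift.up α) := by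
  have nat := types_congr_hom (f.naturality α.op) (ULift.up (𝟙 ⦋n⦌))
  simp only [types_comp_apply] at nat
  have h2 : (Δ[n].map α.op (ULift.up (𝟙 ⦋n⦌))) = ULift.up α := by
    show ULift.up (α ≫ 𝟙 ⦋n⦌) = ULift.up α
    rw [Category.comp_id]
  exact nat.symm.trans (congrArg _ h2)

/-- Every 2-groupoid (horn fillers for all `m ≥ 1`, unique for `m ≥ 3`) is
3-coskeletal: the unit `X ⟶ cosk₃ (tr₃ X)` of the coskeleton adjunction is an
isomorphism of simplicial sets. -/
theorem two_groupoid_is_three_coskeletal (X : SSet.{u})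
    (h₁ : ∀ (m : ℕ), 1 ≤ m → ∀ j : Fin (m + 1), X.KanCond m j)
    (h₂ : ∀ (m : ℕ), 3 ≤ m → ∀ j : Fin (m + 1), X.KanCondUnique m j) :
    IsIso ((SSet.coskAdj 3).unit.app X) := by
  have : ∀ m : SimplexCategoryᵒᵖ, IsIso (((SSet.coskAdj 3).unit.app X).app m) := by
    intro m
    induction m using Opposite.rec with | op m' => ?_
    induction m' using SimplexCategory.rec with | mk n => ?_
    rw [CategoryTheory.isIso_iff_bijective]
    have key : ∀ f : Δ[n] ⟶ X,
        ((SSet.coskAdj 3).unit.app X).app (op ⦋n⦌) (SSet.yonedaEquiv (X := X) (n := ⦋n⦌) f)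
        = SSet.yonedaEquiv (n := ⦋n⦌) (((SSet.coskAdj 3).homEquiv Δ[n] ((SSet.truncation 3).obj X))
            ((SSet.truncation 3).map f)) := by
      intro f
      have h1 : ((SSet.coskAdj 3).homEquiv Δ[n] ((SSet.truncation 3).obj X))
            ((SSet.truncation 3).map f)
          = (SSet.coskAdj 3).unit.app Δ[n]
              ≫ (SSet.Truncated.cosk 3).map ((SSet.truncation 3).map f) :=
        Adjunction.homEquiv_unit (SSet.coskAdj 3) _ _ _
      have h2 : (SSet.coskAdj 3).unit.app Δ[n]
            ≫ (SSet.Truncated.cosk 3).map ((SSet.truncation 3).map f)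
          = f ≫ (SSet.coskAdj 3).unit.app X := ((SSet.coskAdj 3).unit.naturality f).symm
      rw [h1, h2]
      rfl
    have hΦ : Function.Bijective (fun f : Δ[n] ⟶ X => (SSet.truncation 3).map f) := by
      constructor
      · intro f g hfg
        have he : SSet.yonedaEquiv (X := X) (n := ⦋n⦌) f = SSet.yonedaEquiv (X := X) (n := ⦋n⦌) g := by
          apply eq_of_low_faces h₂ n
          intro p hp α
          rw [yoneda_map_app f α, yoneda_map_app g α]
          exact types_congr_hom (congrFun (congrArg NatTrans.app hfg) (op ⟨⦋p⦌, hp⟩)) (ULift.up α)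
        exact (SSet.yonedaEquiv (X := X) (n := ⦋n⦌)).injective he
      · intro g
        obtain ⟨x, hx⟩ := exists_lift h₁ h₂ n g
        refine ⟨(SSet.yonedaEquiv (X := X) (n := ⦋n⦌)).symm x, ?_⟩
        apply SSet.Truncated.hom_ext
        intro mm
        induction mm using Opposite.rec with | op mt => ?_
        obtain ⟨m', hm'⟩ := mt
        revert hm'
        induction m' using SimplexCategory.rec with | mk p => ?_
        intro hm'
        ext θ
        obtain ⟨α⟩ := θ
        show ((SSet.yonedaEquiv (X := X) (n := ⦋n⦌)).symm x).app (op ⦋p⦌) (ULift.up α)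
            = g.app (op ⟨⦋p⦌, hm'⟩) (ULift.up α)
        show X.map α.op x = _
        exact hx p hm' α
    have hcomp : ⇑(((SSet.coskAdj 3).unit.app X).app (op ⦋n⦌))
        = (SSet.yonedaEquiv (n := ⦋n⦌))
          ∘ ((SSet.coskAdj 3).homEquiv Δ[n] ((SSet.truncation 3).obj X))
          ∘ (fun f : Δ[n] ⟶ X => (SSet.truncation 3).map f)
          ∘ (SSet.yonedaEquiv (X := X) (n := ⦋n⦌)).symm := by
      funext x
      have hk := key ((SSet.yonedaEquiv (X := X) (n := ⦋n⦌)).symm x)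
      rw [Equiv.apply_symm_apply] at hk
      exact hk
    rw [hcomp]
    exact (Equiv.bijective _).comp ((Equiv.bijective _).comp
      (hΦ.comp (Equiv.bijective _)))
  apply NatIso.isIso_of_isIso_app
end

section
/- Let X, Z, Z' be simplicial sets each satisfying Kan(m,j) for all m ≥ 1, 0 ≤ j ≤ m, and Kan!(m,j) for all m ≥ 3, 0 ≤ j ≤ m (i.e., 2-groupoids), and let f : Z → X and f' : Z' → X be equivalences of 2-groupoids. Let Z'' = Z ×_X Z' be the levelwise pullback, the simplicial set with Z''_n = Z_n ×_{X_n} Z'_n. Then Z'' is again a 2-groupoid, and the two projections Z'' → Z and Z'' → Z' are equivalences of 2-groupoids. -/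
open CategoryTheory Simplicial Opposite

/-- `X` is a (Lie, here: set-theoretic) 2-groupoid: horn fillers exist for all
`m ≥ 1` and are unique for `m ≥ 3`. -/
def SSet.Is2Groupoid (X : SSet.{u}) : Prop :=
  (∀ (m : ℕ), 1 ≤ m → ∀ j : Fin (m + 1), X.KanCond m j) ∧
  (∀ (m : ℕ), 3 ≤ m → ∀ j : Fin (m + 1), X.KanCondUnique m j)

/-- The restriction of an `n`-simplex `σ` of `Z` to the boundary `∂Δ[n]`. -/
def SSet.bdryRes {Z : SSet.{u}} (n : ℕ) (σ : Z _⦋n⦌) : (∂Δ[n] : SSet.{u}) ⟶ Z :=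
  ∂Δ[n].ι ≫ (SSet.yonedaEquiv (X := Z) (n := ⦋n⦌)).symm σ

/-- A simplicial map `f : Z ⟶ X` is an equivalence of 2-groupoids: the natural map
`Z_n → hom(∂Δ[n], Z) ×_{hom(∂Δ[n], X)} X_n` is surjective for `n = 0` (equivalently
`Z₀ → X₀` is surjective) and `n = 1`, and bijective for `n = 2`. -/
def SSet.IsEquiv2Gpd {Z X : SSet.{u}} (f : Z ⟶ X) : Prop :=
  Function.Surjective (f.app (op ⦋0⦌)) ∧
  (∀ (u : (∂Δ[1] : SSet.{u}) ⟶ Z) (σ : X _⦋1⦌), u ≫ f = SSet.bdryRes 1 σ →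
    ∃ τ : Z _⦋1⦌, SSet.bdryRes 1 τ = u ∧ f.app (op ⦋1⦌) τ = σ) ∧
  (∀ (u : (∂Δ[2] : SSet.{u}) ⟶ Z) (σ : X _⦋2⦌), u ≫ f = SSet.bdryRes 2 σ →
    ∃! τ : Z _⦋2⦌, SSet.bdryRes 2 τ = u ∧ f.app (op ⦋2⦌) τ = σ)

/-- The levelwise pullback `Z ×_X Z'` of two simplicial maps `f : Z ⟶ X` and
`f' : Z' ⟶ X`: its `n`-simplices are the pairs `(z, z')` with `f z = f' z'`. -/
def SSet.levelPullback {Z Z' X : SSet.{u}} (f : Z ⟶ X) (f' : Z' ⟶ X) : SSet.{u} where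
  obj m := { p : Z.obj m × Z'.obj m // f.app m p.1 = f'.app m p.2 }
  map {m₁ m₂} g := TypeCat.ofHom fun p => ⟨⟨Z.map g p.1.1, Z'.map g p.1.2⟩, by
    have h1 := types_congr_hom (f.naturality g) p.1.1
    have h2 := types_congr_hom (f'.naturality g) p.1.2
    simp only [types_comp_apply] at h1 h2
    rw [h1, h2, p.2]⟩
  map_id m := by
    ext p : 3
    apply Subtype.ext
    show (Z.map (𝟙 m) p.1.1, Z'.map (𝟙 m) p.1.2) = p.1
    rw [FunctorToTypes.map_id_apply, FunctorToTypes.map_id_apply]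
  map_comp {m₁ m₂ m₃} g h := by
    ext p : 3
    apply Subtype.ext
    show (Z.map (g ≫ h) p.1.1, Z'.map (g ≫ h) p.1.2) = _
    rw [FunctorToTypes.map_comp_apply, FunctorToTypes.map_comp_apply]
    rfl

/-- The first projection `Z ×_X Z' ⟶ Z`. -/
def SSet.levelPullback.fst {Z Z' X : SSet.{u}} (f : Z ⟶ X) (f' : Z' ⟶ X) :
    SSet.levelPullback f f' ⟶ Z where
  app m := TypeCat.ofHom fun p => p.1.1
  naturality m₁ m₂ g := by ext p; rfl

/-- The second projection `Z ×_X Z' ⟶ Z'`. -/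
def SSet.levelPullback.snd {Z Z' X : SSet.{u}} (f : Z ⟶ X) (f' : Z' ⟶ X) :
    SSet.levelPullback f f' ⟶ Z' where
  app m := TypeCat.ofHom fun p => p.1.2
  naturality m₁ m₂ g := by ext p; rfl

open SimplexCategory SSet

universe u
namespace TwoGpdAux

lemma yE_app {X : SSet.{u}} {n : ℕ} (σ : X _⦋n⦌) (k : SimplexCategoryᵒᵖ) (α : Δ[n].obj k) :
    ((SSet.yonedaEquiv (X := X) (n := ⦋n⦌)).symm σ).app k α = X.map (α.down).op σ := rfl

lemma yE_comp {X Y : SSet.{u}} {n : ℕ} (σ : X _⦋n⦌) (g : X ⟶ Y) :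
    (SSet.yonedaEquiv (X := X) (n := ⦋n⦌)).symm σ ≫ g = (SSet.yonedaEquiv (X := Y) (n := ⦋n⦌)).symm (g.app _ σ) := by
  ext k α
  have := types_congr_hom (g.naturality α.down.op) σ
  simp only [types_comp_apply] at this
  exact this

lemma bdryRes_comp {X Y : SSet.{u}} {n : ℕ} (σ : X _⦋n⦌) (g : X ⟶ Y) :
    SSet.bdryRes n σ ≫ g = SSet.bdryRes n (g.app _ σ) := by
  simp only [SSet.bdryRes, Category.assoc, yE_comp]

/-- The `j`-th face of the boundary `∂Δ[n+1]`. -/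
def bFace {n : ℕ} (j : Fin (n+2)) : ∂Δ[n+1] _⦋n⦌ :=
  ⟨(SSet.stdSimplex.objEquiv).symm (SimplexCategory.δ j), fun hs => by
    obtain ⟨k, hk⟩ := hs j
    exact Fin.succAbove_ne j k hk⟩

lemma bdryRes_app_bFace {X : SSet.{u}} {n : ℕ} (σ : X _⦋n+1⦌) (j : Fin (n+2)) :
    (SSet.bdryRes (n+1) σ).app (op ⦋n⦌) (bFace j) = X.map (SimplexCategory.δ j).op σ := rfl



/-- Two morphisms from the boundary are equal if they agree on all faces. -/
lemma boundary_hom_ext {n : ℕ} {S : SSet.{u}} (σ₁ σ₂ : (∂Δ[n+1] : SSet.{u}) ⟶ S)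
    (h : ∀ j, σ₁.app _ (bFace j) = σ₂.app _ (bFace j)) :
    σ₁ = σ₂ := by
  apply NatTrans.ext; apply funext; apply Opposite.rec; apply SimplexCategory.rec
  intro m; ext f
  obtain ⟨f', hf⟩ := (stdSimplex.objEquiv).symm.surjective f.1
  obtain ⟨j, hfj⟩ : ∃ j, ∀ k, f'.toOrderHom k ≠ j := by
    obtain ⟨f, hf'⟩ := f
    subst hf
    by_contra hcon
    push_neg at hcon
    exact hf' (fun b => by obtain ⟨a, ha⟩ := hcon b; exact ⟨a, ha⟩)
  have H : f = ((∂Δ[n+1] : SSet.{u}).map (factor_δ f' j).op) (bFace j) := by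
    apply Subtype.ext
    apply (stdSimplex.objEquiv).injective
    rw [← hf]
    exact (factor_δ_spec f' j hfj).symm
  have H₁ := types_congr_hom (σ₁.naturality (factor_δ f' j).op) (bFace j)
  have H₂ := types_congr_hom (σ₂.naturality (factor_δ f' j).op) (bFace j)
  dsimp at H₁ H₂
  subst H
  rw [h j] at H₁
  exact H₁.trans H₂.symm



/-- Factor a map through a face map, with arbitrary domain. -/
def myFactor {kk : SimplexCategory} {n : ℕ} (f : kk ⟶ ⦋n+1⦌) (i : Fin (n+2)) : kk ⟶ ⦋n⦌ :=
  f ≫ SimplexCategory.σ (Fin.predAbove 0 i)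

lemma δ_σ_fix {n : ℕ} (i : Fin (n+2)) (v : Fin (n+2)) (h : v ≠ i) :
    (SimplexCategory.δ i).toOrderHom
      ((SimplexCategory.σ (Fin.predAbove 0 i)).toOrderHom v) = v := by
  have h1 := factor_δ_spec (SimplexCategory.const ⦋0⦌ ⦋n+1⦌ v) i (fun k => h)
  have h2 := congr_arg (fun g => SimplexCategory.Hom.toOrderHom g 0) h1
  simpa [factor_δ, SimplexCategory.comp_toOrderHom] using h2

lemma myFactor_spec {kk : SimplexCategory} {n : ℕ} (f : kk ⟶ ⦋n+1⦌) (i : Fin (n+2))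
    (hf : ∀ x, f.toOrderHom x ≠ i) : myFactor f i ≫ SimplexCategory.δ i = f := by
  apply SimplexCategory.Hom.ext
  apply OrderHom.ext
  funext x
  exact δ_σ_fix i _ (hf x)

lemma fin2_const {kk : SimplexCategory} (f : kk ⟶ ⦋1⦌)
    (hf : ¬ Function.Surjective f.toOrderHom) (x : Fin (kk.len + 1)) :
    f.toOrderHom x = f.toOrderHom 0 := by
  obtain ⟨v, hv⟩ : ∃ v, ∀ a, f.toOrderHom a ≠ v := by
    by_contra hcon
    push_neg at hcon
    exact hf (fun b => by obtain ⟨a, ha⟩ := hcon b; exact ⟨a, ha⟩)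
  have h1 := hv x
  have h2 := hv 0
  have hx := (f.toOrderHom x).isLt
  have h0 := (f.toOrderHom 0).isLt
  have hvl := v.isLt
  simp only [len_mk] at hx h0 hvl
  apply Fin.ext
  simp only [Fin.ext_iff] at h1 h2
  omega



lemma bd1_not_surj {k : SimplexCategoryᵒᵖ} (α : (∂Δ[1] : SSet.{u}).obj k) :
    ¬ Function.Surjective (α.1.down.toOrderHom) := α.2

/-- Construct a map `(∂Δ[1] : SSet.{u}) ⟶ Z` from two vertices (indexed by the vertices of `Δ[1]`). -/
def bd1Mk {Z : SSet.{u}} (w : Fin 2 → Z _⦋0⦌) : (∂Δ[1] : SSet.{u}) ⟶ Z where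
  app k := TypeCat.ofHom fun α => Z.map (SimplexCategory.const k.unop ⦋0⦌ 0).op (w (α.1.down.toOrderHom 0))
  naturality k₁ k₂ g := by
    ext α
    dsimp only [TypeCat.Fun.toFun_apply, types_comp_apply, TypeCat.ofHom_apply]
    have hd : (((∂Δ[1] : SSet.{u}).map g α).1).down = g.unop ≫ α.1.down := rfl
    have hval : (((∂Δ[1] : SSet.{u}).map g α).1).down.toOrderHom 0 = α.1.down.toOrderHom 0 := by
      rw [hd]
      exact fin2_const α.1.down (bd1_not_surj α) _
    rw [hval, ← FunctorToTypes.map_comp_apply]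
    have hm : (SimplexCategory.const k₂.unop ⦋0⦌ 0).op
        = (SimplexCategory.const k₁.unop ⦋0⦌ 0).op ≫ g := by
      conv_rhs => rw [← g.op_unop, ← op_comp]
      exact congr_arg Quiver.Hom.op (Subsingleton.elim _ _)
    rw [hm]

lemma bd1Mk_app_bFace {Z : SSet.{u}} (w : Fin 2 → Z _⦋0⦌) (j : Fin 2) :
    (bd1Mk w).app (op ⦋0⦌) (bFace j) = w ((SimplexCategory.δ j).toOrderHom 0) := by
  show Z.map (SimplexCategory.const ⦋0⦌ ⦋0⦌ 0).op _ = _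
  rw [SimplexCategory.const_eq_id]
  simp only [op_id, FunctorToTypes.map_id_apply]
  rfl

/-- A map `⦋0⦌ ⟶ ⦋n⦌` is the constant at its value. -/
lemma hom_from_zero_eq_const {n : SimplexCategory} (f : (⦋0⦌ : SimplexCategory) ⟶ n) :
    f = SimplexCategory.const ⦋0⦌ n (f.toOrderHom 0) :=
  SimplexCategory.Hom.ext_zero_left _ _ rfl



lemma not_surj_exists {n : ℕ} {kk : SimplexCategory} (f : kk ⟶ ⦋n⦌)
    (hf : ¬ Function.Surjective f.toOrderHom) : ∃ i, ∀ x, f.toOrderHom x ≠ i := by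
  simpa [Function.Surjective, not_forall, eq_comm] using hf

lemma comp_apply' {a b c : SimplexCategory} (f : a ⟶ b) (g : b ⟶ c) (x : Fin (a.len + 1)) :
    (f ≫ g).toOrderHom x = g.toOrderHom (f.toOrderHom x) := rfl

lemma bd2_welldef {Z : SSet.{u}} (e : Fin 3 → Z _⦋1⦌) (w : Fin 3 → Z _⦋0⦌)
    (hcomp : ∀ (i : Fin 3) (b : Fin 2),
      Z.map (SimplexCategory.const ⦋0⦌ ⦋1⦌ b).op (e i) = w ((SimplexCategory.δ i).toOrderHom b))
    {kk : SimplexCategory} (ψ : kk ⟶ ⦋2⦌) (i i' : Fin 3) (β β' : kk ⟶ ⦋1⦌)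
    (hβ : β ≫ SimplexCategory.δ i = ψ) (hβ' : β' ≫ SimplexCategory.δ i' = ψ) :
    Z.map β.op (e i) = Z.map β'.op (e i') := by
  by_cases hii : i = i'
  · subst hii
    obtain rfl : β = β' := (cancel_mono (SimplexCategory.δ i)).mp (hβ.trans hβ'.symm)
    rfl
  · -- both β and β' are constant
    obtain ⟨b, hb⟩ : ∃ b, (SimplexCategory.δ i).toOrderHom b = i' :=
      Fin.exists_succAbove_eq (Ne.symm hii)
    obtain ⟨b', hb'⟩ : ∃ b', (SimplexCategory.δ i').toOrderHom b' = i :=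
      Fin.exists_succAbove_eq hii
    have hmiss : ∀ x, β.toOrderHom x ≠ b := by
      intro x hx
      have h1 : ψ.toOrderHom x = i' := by rw [← hβ, comp_apply', hx, hb]
      have h2 : ψ.toOrderHom x ≠ i' := by
        rw [← hβ', comp_apply']
        exact Fin.succAbove_ne i' _
      exact h2 h1
    have hmiss' : ∀ x, β'.toOrderHom x ≠ b' := by
      intro x hx
      have h1 : ψ.toOrderHom x = i := by rw [← hβ', comp_apply', hx, hb']
      have h2 : ψ.toOrderHom x ≠ i := by
        rw [← hβ, comp_apply']
        exact Fin.succAbove_ne i _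
      exact h2 h1
    have hβc : ∀ x, β.toOrderHom x = β.toOrderHom 0 := by
      intro x
      have h1 := hmiss x
      have h2 := hmiss 0
      have hx := (β.toOrderHom x).isLt
      have h0 := (β.toOrderHom 0).isLt
      have hbl := b.isLt
      simp only [len_mk] at hx h0 hbl
      apply Fin.ext
      simp only [Fin.ext_iff] at h1 h2
      omega
    have hβc' : ∀ x, β'.toOrderHom x = β'.toOrderHom 0 := by
      intro x
      have h1 := hmiss' x
      have h2 := hmiss' 0
      have hx := (β'.toOrderHom x).isLt
      have h0 := (β'.toOrderHom 0).isLt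
      have hbl := b'.isLt
      simp only [len_mk] at hx h0 hbl
      apply Fin.ext
      simp only [Fin.ext_iff] at h1 h2
      omega
    have hβeq : β = SimplexCategory.const kk ⦋1⦌ (β.toOrderHom 0) :=
      SimplexCategory.Hom.ext _ _ (OrderHom.ext _ _ (funext hβc))
    have hβeq' : β' = SimplexCategory.const kk ⦋1⦌ (β'.toOrderHom 0) :=
      SimplexCategory.Hom.ext _ _ (OrderHom.ext _ _ (funext hβc'))
    have hvert : (SimplexCategory.δ i).toOrderHom (β.toOrderHom 0)
        = (SimplexCategory.δ i').toOrderHom (β'.toOrderHom 0) := by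
      have e1 : (β ≫ SimplexCategory.δ i).toOrderHom 0 = (β' ≫ SimplexCategory.δ i').toOrderHom 0 := by
        rw [hβ, hβ']
      rwa [comp_apply', comp_apply'] at e1
    rw [hβeq, hβeq', SimplexCategory.const_fac_thru_zero,
      SimplexCategory.const_fac_thru_zero _ _ (β'.toOrderHom 0), op_comp,
      FunctorToTypes.map_comp_apply, op_comp, FunctorToTypes.map_comp_apply,
      hcomp, hcomp, hvert]



lemma bd2_miss {k : SimplexCategoryᵒᵖ} (α : (∂Δ[2] : SSet.{u}).obj k) :
    ∃ i, ∀ x, α.1.down.toOrderHom x ≠ i :=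
  not_surj_exists _ α.2

/-- Construct a map `(∂Δ[2] : SSet.{u}) ⟶ Z` from three edges with compatible vertices. -/
noncomputable def bd2Mk {Z : SSet.{u}} (e : Fin 3 → Z _⦋1⦌) (w : Fin 3 → Z _⦋0⦌)
    (hcomp : ∀ (i : Fin 3) (b : Fin 2),
      Z.map (SimplexCategory.const ⦋0⦌ ⦋1⦌ b).op (e i) = w ((SimplexCategory.δ i).toOrderHom b)) :
    (∂Δ[2] : SSet.{u}) ⟶ Z where
  app k := TypeCat.ofHom fun α =>
    Z.map (myFactor α.1.down (Classical.choose (bd2_miss α))).op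
      (e (Classical.choose (bd2_miss α)))
  naturality k₁ k₂ g := by
    ext α
    dsimp only [TypeCat.Fun.toFun_apply, types_comp_apply, TypeCat.ofHom_apply]
    rw [← FunctorToTypes.map_comp_apply]
    set α' := (∂Δ[2] : SSet.{u}).map g α with hα'
    have hd : α'.1.down = g.unop ≫ α.1.down := rfl
    have hspec := Classical.choose_spec (bd2_miss α)
    have hspec' := Classical.choose_spec (bd2_miss α')
    have hop : (myFactor α.1.down (Classical.choose (bd2_miss α))).op ≫ g
        = (g.unop ≫ myFactor α.1.down (Classical.choose (bd2_miss α))).op := by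
      conv_lhs => rw [← g.op_unop, ← op_comp]
    rw [hop]
    exact bd2_welldef e w hcomp (g.unop ≫ α.1.down) _ _ _ _
      (by rw [← hd]; exact myFactor_spec _ _ hspec')
      (by rw [Category.assoc, myFactor_spec _ _ hspec])

lemma bd2Mk_app_bFace {Z : SSet.{u}} (e : Fin 3 → Z _⦋1⦌) (w : Fin 3 → Z _⦋0⦌)
    (hcomp : ∀ (i : Fin 3) (b : Fin 2),
      Z.map (SimplexCategory.const ⦋0⦌ ⦋1⦌ b).op (e i) = w ((SimplexCategory.δ i).toOrderHom b))
    (j : Fin 3) :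
    (bd2Mk e w hcomp).app (op ⦋1⦌) (bFace j) = e j := by
  have hspec := Classical.choose_spec (bd2_miss (bFace j : (∂Δ[2] : SSet.{u}) _⦋1⦌))
  have := bd2_welldef e w hcomp (SimplexCategory.δ j) _ j _ (𝟙 (⦋1⦌ : SimplexCategory))
    (myFactor_spec _ _ hspec) (Category.id_comp _)
  rw [op_id] at this
  exact this.trans (FunctorToTypes.map_id_apply Z (e j))


lemma fin2_ne_ne {a b c : Fin 2} (h1 : a ≠ c) (h2 : b ≠ c) : a = b := by
  have ha := a.isLt; have hb := b.isLt; have hc := c.isLt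
  have h1' : a.val ≠ c.val := fun h => h1 (Fin.ext h)
  have h2' : b.val ≠ c.val := fun h => h2 (Fin.ext h)
  apply Fin.ext
  omega

lemma exists_δ_vertex (b : Fin 2) :
    ∃ j' : Fin 2, j' ≠ b ∧ (SimplexCategory.δ j').toOrderHom 0 = b := by
  obtain ⟨j', hj'⟩ := exists_ne b
  exact ⟨j', hj', fin2_ne_ne (Fin.succAbove_ne _ _) (Ne.symm hj')⟩

section Pullback
variable {Z Z' X : SSet.{u}} (f : Z ⟶ X) (f' : Z' ⟶ X)

/-- Lift a compatible pair of maps to the levelwise pullback. -/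
def plift {W : SSet.{u}} (a : W ⟶ Z) (b : W ⟶ Z') (h : a ≫ f = b ≫ f') :
    W ⟶ SSet.levelPullback f f' where
  app k := TypeCat.ofHom fun x => ⟨(a.app k x, b.app k x), types_congr_hom (congr_app h k) x⟩
  naturality k₁ k₂ g := by
    ext x
    apply Subtype.ext
    have ha := types_congr_hom (a.naturality g) x
    have hb := types_congr_hom (b.naturality g) x
    simp only [types_comp_apply] at ha hb
    exact Prod.ext ha hb

lemma plift_fst {W : SSet.{u}} (a : W ⟶ Z) (b : W ⟶ Z') (h : a ≫ f = b ≫ f') :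
    plift f f' a b h ≫ SSet.levelPullback.fst f f' = a := rfl

lemma plift_snd {W : SSet.{u}} (a : W ⟶ Z) (b : W ⟶ Z') (h : a ≫ f = b ≫ f') :
    plift f f' a b h ≫ SSet.levelPullback.snd f f' = b := rfl

lemma pcomm : SSet.levelPullback.fst f f' ≫ f = SSet.levelPullback.snd f f' ≫ f' := by
  ext k x
  exact x.2

lemma phom_ext {W : SSet.{u}} (u v : W ⟶ SSet.levelPullback f f')
    (h1 : u ≫ SSet.levelPullback.fst f f' = v ≫ SSet.levelPullback.fst f f')
    (h2 : u ≫ SSet.levelPullback.snd f f' = v ≫ SSet.levelPullback.snd f f') : u = v := by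
  ext k x
  apply Subtype.ext
  exact Prod.ext (types_congr_hom (congr_app h1 k) x) (types_congr_hom (congr_app h2 k) x)

lemma pelem_ext {k : SimplexCategoryᵒᵖ} (x y : (SSet.levelPullback f f').obj k)
    (h1 : x.1.1 = y.1.1) (h2 : x.1.2 = y.1.2) : x = y :=
  Subtype.ext (Prod.ext h1 h2)

end Pullback

end TwoGpdAux

namespace TwoGpdAux
open SSet

lemma horn_comp_face {X : SSet.{u}} {n : ℕ} {i : Fin (n+2)} (σ : X _⦋n+1⦌) (j : Fin (n+2))
    (h : j ≠ i) :
    (Λ[(n+1), i].ι ≫ (SSet.yonedaEquiv (X := X) (n := ⦋n+1⦌)).symm σ).app (op ⦋n⦌)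
      (SSet.horn.face i j h) = X.map (SimplexCategory.δ j).op σ := rfl

lemma horn_map_const_face {j i : Fin 3} (h : i ≠ j) (b : Fin 2) :
    (Λ[2, j] : SSet.{u}).map (SimplexCategory.const ⦋0⦌ ⦋1⦌ b).op (SSet.horn.face j i h)
      = SSet.horn.const 0 j ((SimplexCategory.δ i).toOrderHom b) (op ⦋0⦌) := by
  apply Subtype.ext
  apply (SSet.stdSimplex.objEquiv).injective
  exact SimplexCategory.const_comp ⦋0⦌ (SimplexCategory.δ i) b

/-- Horn lifting in dimension 1 for an equivalence of 2-groupoids. -/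
lemma hornlift1 {Z' X : SSet.{u}} (f' : Z' ⟶ X) (hf' : SSet.IsEquiv2Gpd f')
    (j : Fin 2) (g' : (Λ[1, j] : SSet.{u}) ⟶ Z') (σX : X _⦋1⦌)
    (hc : g' ≫ f' = Λ[1, j].ι ≫ (SSet.yonedaEquiv (X := X) (n := ⦋1⦌)).symm σX) :
    ∃ τ' : Δ[1] ⟶ Z', g' = Λ[1, j].ι ≫ τ'
      ∧ τ' ≫ f' = (SSet.yonedaEquiv (X := X) (n := ⦋1⦌)).symm σX := by
  obtain ⟨j', hj'ne, hj'val⟩ := exists_δ_vertex j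
  set vj : Z' _⦋0⦌ := g'.app (op ⦋0⦌) (SSet.horn.face j j' hj'ne) with hvj
  have hfvj : f'.app (op ⦋0⦌) vj = X.map (SimplexCategory.δ j').op σX :=
    types_congr_hom (congr_app hc (op ⦋0⦌)) (SSet.horn.face j j' hj'ne)
  set w : Fin 2 → Z' _⦋0⦌ := fun c =>
    if c = j then vj
    else Classical.choose (hf'.1 (X.map (SimplexCategory.const ⦋0⦌ ⦋1⦌ c).op σX)) with hw
  have hwspec : ∀ c, f'.app (op ⦋0⦌) (w c) = X.map (SimplexCategory.const ⦋0⦌ ⦋1⦌ c).op σX := by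
    intro c
    by_cases hcj : c = j
    · subst hcj
      have hwc : w c = vj := by rw [hw]; exact if_pos rfl
      rw [hwc, hfvj]
      have hδ : (SimplexCategory.δ j' : (⦋0⦌ : SimplexCategory) ⟶ ⦋1⦌)
          = SimplexCategory.const ⦋0⦌ ⦋1⦌ ((SimplexCategory.δ j').toOrderHom 0) :=
        hom_from_zero_eq_const _
      conv_lhs => rw [hδ, hj'val]
    · have hwc : w c = Classical.choose
          (hf'.1 (X.map (SimplexCategory.const ⦋0⦌ ⦋1⦌ c).op σX)) := by
        rw [hw]; exact if_neg hcj
      rw [hwc]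
      exact Classical.choose_spec (hf'.1 _)
  have hbd : bd1Mk w ≫ f' = SSet.bdryRes 1 σX := by
    apply boundary_hom_ext
    intro i
    show f'.app _ ((bd1Mk w).app _ (bFace i)) = _
    rw [bd1Mk_app_bFace, bdryRes_app_bFace, hwspec]
    have hδ : (SimplexCategory.δ i : (⦋0⦌ : SimplexCategory) ⟶ ⦋1⦌)
        = SimplexCategory.const ⦋0⦌ ⦋1⦌ ((SimplexCategory.δ i).toOrderHom 0) :=
      hom_from_zero_eq_const _
    conv_rhs => rw [hδ]
  obtain ⟨τ'₁, hb, hfσ⟩ := hf'.2.1 (bd1Mk w) σX hbd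
  refine ⟨(SSet.yonedaEquiv (X := Z') (n := ⦋1⦌)).symm τ'₁, ?_, by rw [yE_comp, hfσ]⟩
  apply SSet.horn.hom_ext
  intro j'' hj''
  obtain rfl : j' = j'' := fin2_ne_ne hj'ne hj''
  show vj = Z'.map (SimplexCategory.δ j').op τ'₁
  have h1 : Z'.map (SimplexCategory.δ j').op τ'₁ = (bd1Mk w).app (op ⦋0⦌) (bFace j') := by
    rw [← hb]
    rfl
  rw [h1, bd1Mk_app_bFace, hj'val]
  have hwc : w j = vj := by rw [hw]; exact if_pos rfl
  rw [hwc]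

end TwoGpdAux

namespace TwoGpdAux
open SSet

/-- Horn lifting in dimension 2 for an equivalence of 2-groupoids. -/
lemma hornlift2 {Z' X : SSet.{u}} (f' : Z' ⟶ X) (hf' : SSet.IsEquiv2Gpd f')
    (j : Fin 3) (g' : (Λ[2, j] : SSet.{u}) ⟶ Z') (σX : X _⦋2⦌)
    (hc : g' ≫ f' = Λ[2, j].ι ≫ (SSet.yonedaEquiv (X := X) (n := ⦋2⦌)).symm σX) :
    ∃ τ' : Δ[2] ⟶ Z', g' = Λ[2, j].ι ≫ τ'
      ∧ τ' ≫ f' = (SSet.yonedaEquiv (X := X) (n := ⦋2⦌)).symm σX := by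
  set v : Fin 3 → Z' _⦋0⦌ := fun c => g'.app (op ⦋0⦌) (SSet.horn.const 0 j c (op ⦋0⦌)) with hv
  have hfv : ∀ c, f'.app (op ⦋0⦌) (v c) = X.map (SimplexCategory.const ⦋0⦌ ⦋2⦌ c).op σX :=
    fun c => types_congr_hom (congr_app hc (op ⦋0⦌)) (SSet.horn.const 0 j c (op ⦋0⦌))
  -- the missing edge over the j-th face of σX
  have hbd1 : bd1Mk (fun b => v ((SimplexCategory.δ j).toOrderHom b)) ≫ f'
      = SSet.bdryRes 1 (X.map (SimplexCategory.δ j).op σX) := by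
    apply boundary_hom_ext
    intro i
    show f'.app _ ((bd1Mk _).app _ (bFace i)) = _
    rw [bd1Mk_app_bFace, bdryRes_app_bFace, hfv, ← FunctorToTypes.map_comp_apply, ← op_comp]
    have hδ : SimplexCategory.δ i ≫ SimplexCategory.δ j
        = SimplexCategory.const ⦋0⦌ ⦋2⦌
            ((SimplexCategory.δ i ≫ SimplexCategory.δ j).toOrderHom 0) :=
      hom_from_zero_eq_const _
    rw [hδ]
    rfl
  obtain ⟨ej, hbej, hfej⟩ := hf'.2.1 _ _ hbd1
  set e : Fin 3 → Z' _⦋1⦌ := fun i =>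
    if h : i = j then ej else g'.app (op ⦋1⦌) (SSet.horn.face j i h) with he
  have hej : e j = ej := by rw [he]; exact dif_pos rfl
  have hene : ∀ (i) (h : i ≠ j), e i = g'.app (op ⦋1⦌) (SSet.horn.face j i h) := by
    intro i h
    rw [he]
    exact dif_neg h
  have hcompe : ∀ (i : Fin 3) (b : Fin 2),
      Z'.map (SimplexCategory.const ⦋0⦌ ⦋1⦌ b).op (e i)
        = v ((SimplexCategory.δ i).toOrderHom b) := by
    intro i b
    by_cases hij : i = j
    · subst hij
      rw [hej]
      obtain ⟨j', hj'ne, hj'val⟩ := exists_δ_vertex b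
      have h1 : Z'.map (SimplexCategory.δ j').op ej
          = (bd1Mk (fun b => v ((SimplexCategory.δ i).toOrderHom b))).app (op ⦋0⦌) (bFace j') := by
        rw [← hbej]
        rfl
      rw [bd1Mk_app_bFace, hj'val] at h1
      have hδ : (SimplexCategory.δ j' : (⦋0⦌ : SimplexCategory) ⟶ ⦋1⦌)
          = SimplexCategory.const ⦋0⦌ ⦋1⦌ ((SimplexCategory.δ j').toOrderHom 0) :=
        hom_from_zero_eq_const _
      rw [hδ, hj'val] at h1
      exact h1
    · rw [hene i hij]
      have hnat := types_congr_hom (g'.naturality (SimplexCategory.const ⦋0⦌ ⦋1⦌ b).op)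
        (SSet.horn.face j i hij)
      simp only [types_comp_apply] at hnat
      rw [← hnat, horn_map_const_face]
  -- the full boundary
  have hbd2 : bd2Mk e v hcompe ≫ f' = SSet.bdryRes 2 σX := by
    apply boundary_hom_ext
    intro i
    show f'.app _ ((bd2Mk e v hcompe).app _ (bFace i)) = _
    rw [bd2Mk_app_bFace, bdryRes_app_bFace]
    by_cases hij : i = j
    · subst hij
      rw [hej]
      exact hfej
    · rw [hene i hij]
      exact types_congr_hom (congr_app hc (op ⦋1⦌)) (SSet.horn.face j i hij)
  obtain ⟨τ₂, hτ₂, -⟩ := hf'.2.2 (bd2Mk e v hcompe) σX hbd2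
  obtain ⟨hbτ, hfτ⟩ := hτ₂
  refine ⟨(SSet.yonedaEquiv (X := Z') (n := ⦋2⦌)).symm τ₂, ?_, by rw [yE_comp, hfτ]⟩
  apply SSet.horn.hom_ext
  intro i hij
  show g'.app _ (SSet.horn.face j i hij) = Z'.map (SimplexCategory.δ i).op τ₂
  have h1 : Z'.map (SimplexCategory.δ i).op τ₂ = (bd2Mk e v hcompe).app (op ⦋1⦌) (bFace i) := by
    rw [← hbτ]
    rfl
  rw [h1, bd2Mk_app_bFace, hene i hij]

end TwoGpdAux

open TwoGpdAux SimplexCategory in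
/-- If `Z`, `Z'` and `X` are 2-groupoids and `f : Z ⟶ X`, `f' : Z' ⟶ X` are
equivalences of 2-groupoids, then the levelwise pullback `Z'' = Z ×_X Z'` is again a
2-groupoid and the two projections `Z'' ⟶ Z` and `Z'' ⟶ Z'` are equivalences of
2-groupoids. -/
theorem levelPullback_is2Groupoid_and_proj_equiv {Z Z' X : SSet.{u}}
    (hZ : Z.Is2Groupoid) (hZ' : Z'.Is2Groupoid) (hX : X.Is2Groupoid)
    (f : Z ⟶ X) (f' : Z' ⟶ X)
    (hf : SSet.IsEquiv2Gpd f) (hf' : SSet.IsEquiv2Gpd f') :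
    (SSet.levelPullback f f').Is2Groupoid ∧
    SSet.IsEquiv2Gpd (SSet.levelPullback.fst f f') ∧
    SSet.IsEquiv2Gpd (SSet.levelPullback.snd f f') := by
  -- horn filling in the pullback
  have fill : ∀ (m : ℕ), 1 ≤ m → ∀ (j : Fin (m+1)), (SSet.levelPullback f f').KanCond m j := by
    intro m hm j σ₀
    obtain ⟨τ, hτ⟩ := hZ.1 m hm j (σ₀ ≫ SSet.levelPullback.fst f f')
    have hcomm : (σ₀ ≫ SSet.levelPullback.snd f f') ≫ f'
        = Λ[m, j].ι ≫ (τ ≫ f) := by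
      rw [Category.assoc, ← pcomm f f', ← Category.assoc, hτ, Category.assoc]
    by_cases hm1 : m = 1
    · subst hm1
      have hy : (SSet.yonedaEquiv (X := X) (n := ⦋1⦌)).symm (SSet.yonedaEquiv (X := X) (n := ⦋1⦌) (τ ≫ f)) = τ ≫ f :=
        Equiv.symm_apply_apply _ _
      obtain ⟨τ', hg', hτ'f⟩ := hornlift1 f' hf' j (σ₀ ≫ SSet.levelPullback.snd f f')
        (SSet.yonedaEquiv (X := X) (n := ⦋1⦌) (τ ≫ f)) (by rw [hy]; exact hcomm)
      have hpl : τ ≫ f = τ' ≫ f' := by rw [hτ'f, hy]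
      refine ⟨plift f f' τ τ' hpl, ?_⟩
      apply phom_ext
      · rw [Category.assoc, plift_fst]
        exact hτ
      · rw [Category.assoc, plift_snd]
        exact hg'
    · by_cases hm2 : m = 2
      · subst hm2
        have hy : (SSet.yonedaEquiv (X := X) (n := ⦋2⦌)).symm (SSet.yonedaEquiv (X := X) (n := ⦋2⦌) (τ ≫ f)) = τ ≫ f :=
          Equiv.symm_apply_apply _ _
        obtain ⟨τ', hg', hτ'f⟩ := hornlift2 f' hf' j (σ₀ ≫ SSet.levelPullback.snd f f')
          (SSet.yonedaEquiv (X := X) (n := ⦋2⦌) (τ ≫ f)) (by rw [hy]; exact hcomm)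
        have hpl : τ ≫ f = τ' ≫ f' := by rw [hτ'f, hy]
        refine ⟨plift f f' τ τ' hpl, ?_⟩
        apply phom_ext
        · rw [Category.assoc, plift_fst]
          exact hτ
        · rw [Category.assoc, plift_snd]
          exact hg'
      · have hm3 : 3 ≤ m := by omega
        obtain ⟨τ', hτ'⟩ := hZ'.1 m (by omega) j (σ₀ ≫ SSet.levelPullback.snd f f')
        have h1 : (σ₀ ≫ SSet.levelPullback.fst f f') ≫ f
            = Λ[m, j].ι ≫ (τ ≫ f) := by
          rw [hτ, Category.assoc]
        have h2 : (σ₀ ≫ SSet.levelPullback.fst f f') ≫ f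
            = Λ[m, j].ι ≫ (τ' ≫ f') := by
          rw [Category.assoc, pcomm f f', ← Category.assoc, hτ', Category.assoc]
        have hpl : τ ≫ f = τ' ≫ f' :=
          (hX.2 m hm3 j ((σ₀ ≫ SSet.levelPullback.fst f f') ≫ f)).unique h1 h2
        refine ⟨plift f f' τ τ' hpl, ?_⟩
        apply phom_ext
        · rw [Category.assoc, plift_fst]
          exact hτ
        · rw [Category.assoc, plift_snd]
          exact hτ'
  refine ⟨⟨fill, ?_⟩, ⟨?_, ?_, ?_⟩, ⟨?_, ?_, ?_⟩⟩
  · -- unique horn filling for m ≥ 3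
    intro m hm j σ₀
    obtain ⟨σ, hσ⟩ := fill m (by omega) j σ₀
    refine ⟨σ, hσ, ?_⟩
    intro σ' hσ'
    apply phom_ext
    · refine (hZ.2 m hm j (σ₀ ≫ SSet.levelPullback.fst f f')).unique ?_ ?_
      · rw [hσ', Category.assoc]
      · rw [hσ, Category.assoc]
    · refine (hZ'.2 m hm j (σ₀ ≫ SSet.levelPullback.snd f f')).unique ?_ ?_
      · rw [hσ', Category.assoc]
      · rw [hσ, Category.assoc]
  -- fst is an equivalence
  · intro z
    obtain ⟨z', hz'⟩ := hf'.1 (f.app _ z)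
    exact ⟨⟨(z, z'), hz'.symm⟩, rfl⟩
  · intro u σ hu
    have h' : (u ≫ SSet.levelPullback.snd f f') ≫ f' = SSet.bdryRes 1 (f.app _ σ) := by
      rw [Category.assoc, ← pcomm f f', ← Category.assoc, hu, bdryRes_comp]
    obtain ⟨τ', h1, h2⟩ := hf'.2.1 (u ≫ SSet.levelPullback.snd f f') (f.app _ σ) h'
    refine ⟨⟨(σ, τ'), h2.symm⟩, ?_, rfl⟩
    apply phom_ext
    · refine (bdryRes_comp _ _).trans ?_
      exact hu.symm
    · refine (bdryRes_comp _ _).trans ?_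
      exact h1
  · intro u σ hu
    have h' : (u ≫ SSet.levelPullback.snd f f') ≫ f' = SSet.bdryRes 2 (f.app _ σ) := by
      rw [Category.assoc, ← pcomm f f', ← Category.assoc, hu, bdryRes_comp]
    obtain ⟨τ', hτ', huniq⟩ := hf'.2.2 (u ≫ SSet.levelPullback.snd f f') (f.app _ σ) h'
    obtain ⟨h1, h2⟩ := hτ'
    refine ⟨⟨(σ, τ'), h2.symm⟩, ⟨?_, rfl⟩, ?_⟩
    · apply phom_ext
      · refine (bdryRes_comp _ _).trans ?_
        exact hu.symm
      · refine (bdryRes_comp _ _).trans ?_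
        exact h1
    · rintro y ⟨hyb, hyσ⟩
      apply pelem_ext
      · exact hyσ
      · refine huniq y.1.2 ⟨?_, ?_⟩
        · show SSet.bdryRes 2 ((SSet.levelPullback.snd f f').app (op ⦋2⦌) y) = _
          rw [← bdryRes_comp, hyb]
        · show f'.app _ y.1.2 = f.app _ σ
          rw [← y.2]
          exact congrArg _ hyσ
  -- snd is an equivalence
  · intro z'
    obtain ⟨z, hz⟩ := hf.1 (f'.app _ z')
    exact ⟨⟨(z, z'), hz⟩, rfl⟩
  · intro u σ hu
    have h' : (u ≫ SSet.levelPullback.fst f f') ≫ f = SSet.bdryRes 1 (f'.app _ σ) := by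
      rw [Category.assoc, pcomm f f', ← Category.assoc, hu, bdryRes_comp]
    obtain ⟨τ, h1, h2⟩ := hf.2.1 (u ≫ SSet.levelPullback.fst f f') (f'.app _ σ) h'
    refine ⟨⟨(τ, σ), h2⟩, ?_, rfl⟩
    apply phom_ext
    · refine (bdryRes_comp _ _).trans ?_
      exact h1
    · refine (bdryRes_comp _ _).trans ?_
      exact hu.symm
  · intro u σ hu
    have h' : (u ≫ SSet.levelPullback.fst f f') ≫ f = SSet.bdryRes 2 (f'.app _ σ) := by
      rw [Category.assoc, pcomm f f', ← Category.assoc, hu, bdryRes_comp]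
    obtain ⟨τ, hτ', huniq⟩ := hf.2.2 (u ≫ SSet.levelPullback.fst f f') (f'.app _ σ) h'
    obtain ⟨h1, h2⟩ := hτ'
    refine ⟨⟨(τ, σ), h2⟩, ⟨?_, rfl⟩, ?_⟩
    · apply phom_ext
      · refine (bdryRes_comp _ _).trans ?_
        exact h1
      · refine (bdryRes_comp _ _).trans ?_
        exact hu.symm
    · rintro y ⟨hyb, hyσ⟩
      apply pelem_ext
      · refine huniq y.1.1 ⟨?_, ?_⟩
        · show SSet.bdryRes 2 ((SSet.levelPullback.fst f f').app (op ⦋2⦌) y) = _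
          rw [← bdryRes_comp, hyb]
        · show f.app _ y.1.1 = f'.app _ σ
          rw [y.2]
          exact congrArg _ hyσ
      · exact hyσ
end
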